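/- With V_{m,l} the isometry above, for every A ∈ B(H_m) one has V_{m,l}*(A ⊗ 1_{H_{l−m}}) V_{m,l} = Σ_{|r|=l−m} R_r A R_r* |_{H_l} = ι_{m,l}(A). In other words the coherent system ι_{m,l}(A) = p_l(A ⊗ 1)p_l is implemented by the isometries V_{m,l}. -/

import Mathlib

open scoped Matrix

noncomputable section

/-- Words of length `m` in the alphabet `{1,…,n}`. -/
abbrev Wd (n m : ℕ) := Fin m → Fin n

/-- The `m`-th full tensor power `H^{⊗m}` of `H = ℂ^n`, realized as the Euclidean
space with orthonormal basis indexed by words of length `m`. -/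
abbrev TP (n m : ℕ) : Type := EuclideanSpace ℂ (Wd n m)

variable {n : ℕ}

/-- Continuous linear map associated to a (possibly rectangular) matrix. -/
def ofMatR {ι κ : Type} [Fintype ι] [Fintype κ] [DecidableEq ι] [DecidableEq κ]
    (M : Matrix ι κ ℂ) : EuclideanSpace ℂ κ →L[ℂ] EuclideanSpace ℂ ι :=
  LinearMap.toContinuousLinearMap (Matrix.toEuclideanLin M)

/-- Matrix entry of an operator in the standard basis. -/
def ent {a : ℕ} (A : TP n a →L[ℂ] TP n a) (w v : Wd n a) : ℂ :=
  A (EuclideanSpace.single v 1) w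

def wfst {m k : ℕ} (w : Wd n (m + k)) : Wd n m := fun i => w (Fin.castAdd k i)
def wsnd {m k : ℕ} (w : Wd n (m + k)) : Wd n k := fun i => w (Fin.natAdd m i)

/-- Tensor product of vectors, under the identification `H^{⊗m} ⊗ H^{⊗k} = H^{⊗(m+k)}`. -/
def tmul {m k : ℕ} (x : TP n m) (y : TP n k) : TP n (m + k) :=
  (WithLp.equiv 2 _).symm (fun w => x (wfst w) * y (wsnd w))

/-- Tensor product of subspaces `K ⊗ L ⊆ H^{⊗(m+k)}`. -/
def tensorSub {m k : ℕ} (K : Submodule ℂ (TP n m)) (L : Submodule ℂ (TP n k)) :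
    Submodule ℂ (TP n (m + k)) :=
  Submodule.span ℂ {z | ∃ x ∈ K, ∃ y ∈ L, z = tmul x y}

/-- Tensor product of operators, under `H^{⊗m} ⊗ H^{⊗k} = H^{⊗(m+k)}`. -/
def opT {m k : ℕ} (A : TP n m →L[ℂ] TP n m) (B : TP n k →L[ℂ] TP n k) :
    TP n (m + k) →L[ℂ] TP n (m + k) :=
  ofMatR (Matrix.of fun w v => ent A (wfst w) (wfst v) * ent B (wsnd w) (wsnd v))

/-- A subproduct system: `H_0 = ℂ` and `H_{m+k} ⊆ H_m ⊗ H_k`. -/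
def IsSubproduct (H : ∀ m, Submodule ℂ (TP n m)) : Prop :=
  H 0 = ⊤ ∧ ∀ m k, H (m + k) ≤ tensorSub (H m) (H k)

/-- The orthogonal projection `p_m : H^{⊗m} → H_m` (as an operator on `H^{⊗m}`). -/
def prj (H : ∀ m, Submodule ℂ (TP n m)) (m : ℕ) : TP n m →L[ℂ] TP n m :=
  (H m).subtypeL ∘L (H m).orthogonalProjectionOnto

/-- Left creation operator `x ↦ e_j ⊗ x`. -/
def lcreate (j : Fin n) (m : ℕ) : TP n m →L[ℂ] TP n (m + 1) :=
  ofMatR (Matrix.of fun (w : Wd n (m + 1)) (v : Wd n m) =>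
    if w 0 = j ∧ (fun i : Fin m => w i.succ) = v then 1 else 0)

/-- Right creation operator `x ↦ x ⊗ e_j`. -/
def rcreate (j : Fin n) (m : ℕ) : TP n m →L[ℂ] TP n (m + 1) :=
  ofMatR (Matrix.of fun (w : Wd n (m + 1)) (v : Wd n m) =>
    if w (Fin.last m) = j ∧ (fun i : Fin m => w i.castSucc) = v then 1 else 0)

/-- Graded component of the left shift `S_j : H_m → H_{m+1}`, `φ ↦ p_{m+1}(e_j ⊗ φ)`. -/
def lsh (H : ∀ m, Submodule ℂ (TP n m)) (j : Fin n) (m : ℕ) : TP n m →L[ℂ] TP n (m + 1) :=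
  prj H (m + 1) ∘L lcreate j m ∘L prj H m

/-- Graded component of the right shift `R_j : H_m → H_{m+1}`, `φ ↦ p_{m+1}(φ ⊗ e_j)`. -/
def rsh (H : ∀ m, Submodule ℂ (TP n m)) (j : Fin n) (m : ℕ) : TP n m →L[ℂ] TP n (m + 1) :=
  prj H (m + 1) ∘L rcreate j m ∘L prj H m

/-- Iterated left shift `S_r = S_{r_1} ⋯ S_{r_d}` as a map `H_m → H_{m+d}`. -/
def lshW (H : ∀ m, Submodule ℂ (TP n m)) (m : ℕ) :
    ∀ d, Wd n d → (TP n m →L[ℂ] TP n (m + d))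
  | 0, _ => ContinuousLinearMap.id ℂ _
  | d + 1, r => lsh H (r 0) (m + d) ∘L lshW H m d (Fin.tail r)

/-- Iterated right shift `R_r = R_{r_1} ⋯ R_{r_d}` as a map `H_m → H_{m+d}`. -/
def rshW (H : ∀ m, Submodule ℂ (TP n m)) (m : ℕ) :
    ∀ d, Wd n d → (TP n m →L[ℂ] TP n (m + d))
  | 0, _ => ContinuousLinearMap.id ℂ _
  | d + 1, r => rsh H (r (Fin.last d)) (m + d) ∘L rshW H m d (Fin.init r)

/-- Canonical unitary identification `H^{⊗a} = H^{⊗b}` for `a = b`. -/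
def castTP {a b : ℕ} (h : a = b) : TP n a →L[ℂ] TP n b :=
  ofMatR (Matrix.of fun (w : Wd n b) (v : Wd n a) =>
    if (fun i => w (Fin.cast h i)) = v then 1 else 0)

/-- `S_s : H_m → H_l` for a word `s` of length `l - m`. -/
def lshWTo (H : ∀ m, Submodule ℂ (TP n m)) (m l : ℕ) (h : m ≤ l) (s : Wd n (l - m)) :
    TP n m →L[ℂ] TP n l :=
  castTP (by omega : m + (l - m) = l) ∘L lshW H m (l - m) s

/-- `R_r : H_m → H_l` for a word `r` of length `l - m`. -/
def rshWTo (H : ∀ m, Submodule ℂ (TP n m)) (m l : ℕ) (h : m ≤ l) (r : Wd n (l - m)) :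
    TP n m →L[ℂ] TP n l :=
  castTP (by omega : m + (l - m) = l) ∘L rshW H m (l - m) r

/-- Extension of an operator on `H_m` by zero to `H^{⊗m}`. -/
def extOp (H : ∀ m, Submodule ℂ (TP n m)) {m : ℕ} (A : ↥(H m) →L[ℂ] ↥(H m)) :
    TP n m →L[ℂ] TP n m :=
  (H m).subtypeL ∘L A ∘L (H m).orthogonalProjectionOnto

/-- Compression of an operator on `H^{⊗m}` to `H_m`. -/
def cmpOp (H : ∀ m, Submodule ℂ (TP n m)) {m : ℕ} (T : TP n m →L[ℂ] TP n m) :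
    ↥(H m) →L[ℂ] ↥(H m) :=
  (H m).orthogonalProjectionOnto ∘L T ∘L (H m).subtypeL

def tk {m l : ℕ} (h : m ≤ l) (w : Wd n l) : Wd n m := fun i => w (Fin.castLE h i)
def dr (m : ℕ) {l : ℕ} (w : Wd n l) : Wd n (l - m) :=
  fun i => w ⟨m + i.1, by have := i.isLt; omega⟩

/-- `A ⊗ B` on `H^{⊗l} = H^{⊗m} ⊗ H^{⊗(l-m)}`. -/
def opTG {m l : ℕ} (h : m ≤ l) (A : TP n m →L[ℂ] TP n m)
    (B : TP n (l - m) →L[ℂ] TP n (l - m)) : TP n l →L[ℂ] TP n l :=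
  ofMatR (Matrix.of fun w v => ent A (tk h w) (tk h v) * ent B (dr m w) (dr m v))

/-- The inductive-system map `ι_{m,l}(A) = p_l (A ⊗ 1) p_l : B(H_m) → B(H_l)`. -/
def iota (H : ∀ m, Submodule ℂ (TP n m)) {m l : ℕ} (h : m ≤ l)
    (A : ↥(H m) →L[ℂ] ↥(H m)) : ↥(H l) →L[ℂ] ↥(H l) :=
  cmpOp H (opTG h (extOp H A) (ContinuousLinearMap.id ℂ (TP n (l - m))))

/-- The chirality-flipped inductive map `ῑ_{m,l}(A) = Σ_{|s|=l-m} S_s A S_s^* |_{H_l}`. -/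
def iotabar (H : ∀ m, Submodule ℂ (TP n m)) {m l : ℕ} (h : m ≤ l)
    (A : ↥(H m) →L[ℂ] ↥(H m)) : ↥(H l) →L[ℂ] ↥(H l) :=
  cmpOp H (∑ s : Wd n (l - m),
    lshWTo H m l h s ∘L extOp H A ∘L ContinuousLinearMap.adjoint (lshWTo H m l h s))

/-- The word `j` of length one. -/
def letter (j : Fin n) : Wd n 1 := fun _ => j

/-- `Q^{⊗m}` on `H^{⊗m}`. -/
def tpow (Q : TP n 1 →L[ℂ] TP n 1) (m : ℕ) : TP n m →L[ℂ] TP n m :=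
  ofMatR (Matrix.of fun w v => ∏ i : Fin m, ent Q (letter (w i)) (letter (v i)))

/-- Diagonal entry `(Q^{⊗d})_{r,r}`. -/
def Qdg (Q : TP n 1 →L[ℂ] TP n 1) {d : ℕ} (r : Wd n d) : ℂ :=
  ∏ i, ent Q (letter (r i)) (letter (r i))

/-- Trace of an operator. -/
def trOp {E : Type*} [NormedAddCommGroup E] [Module ℂ E] (A : E →L[ℂ] E) : ℂ :=
  LinearMap.trace ℂ E A.toLinearMap

/-- `Tr(Q_m)` where `Q_m = p_m Q^{⊗m} p_m ∈ B(H_m)`. -/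
def trQ (H : ∀ m, Submodule ℂ (TP n m)) (Q : TP n 1 →L[ℂ] TP n 1) (m : ℕ) : ℂ :=
  trOp (cmpOp H (tpow Q m))

/-- The state `φ_m(A) = Tr(ρ^{(m)} A)`, `ρ^{(m)} = Q_m / Tr(Q_m)`. -/
def phiSt (H : ∀ m, Submodule ℂ (TP n m)) (Q : TP n 1 →L[ℂ] TP n 1) (m : ℕ)
    (A : ↥(H m) →L[ℂ] ↥(H m)) : ℂ :=
  trOp (cmpOp H (tpow Q m) ∘L A) / trQ H Q m

/-- The projective-system map
`j_{l,m}(A) = (Tr Q_m / Tr Q_l) Σ_{|r|=l-m} (Q^{⊗(l-m)})_{r,r} R_r^* A R_r |_{H_m}`. -/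
def jmap (H : ∀ m, Submodule ℂ (TP n m)) (Q : TP n 1 →L[ℂ] TP n 1) {m l : ℕ} (h : m ≤ l)
    (A : ↥(H l) →L[ℂ] ↥(H l)) : ↥(H m) →L[ℂ] ↥(H m) :=
  (trQ H Q m / trQ H Q l) • cmpOp H (∑ r : Wd n (l - m),
    Qdg Q r • (ContinuousLinearMap.adjoint (rshWTo H m l h r) ∘L extOp H A ∘L rshWTo H m l h r))

/-- `ρ^{(m)} = Q_m / Tr(Q_m)`, extended by zero to `H^{⊗m}`. -/
def rhoExt (H : ∀ m, Submodule ℂ (TP n m)) (Q : TP n 1 →L[ℂ] TP n 1) (m : ℕ) :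
    TP n m →L[ℂ] TP n m :=
  (trQ H Q m)⁻¹ • (prj H m ∘L tpow Q m ∘L prj H m)

/-- The normalization constant `√(Tr(Q_m)Tr(Q_k)/Tr(Q_{m+k}))`. -/
def lamC (H : ∀ m, Submodule ℂ (TP n m)) (Q : TP n 1 →L[ℂ] TP n 1) (m k : ℕ) : ℂ :=
  (trQ H Q m * trQ H Q k / trQ H Q (m + k)) ^ ((1 : ℂ) / 2)

/-- Right tensoring `x ↦ x ⊗ y` as a continuous linear map. -/
def tensR {m k : ℕ} (y : TP n k) : TP n m →L[ℂ] TP n (m + k) :=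
  ofMatR (Matrix.of fun w v => if wfst w = v then y (wsnd w) else 0)

/-- The map `V_{m,l} ψ = √(TrQ_m TrQ_{l-m}/TrQ_l) Σ_{|r|=l-m} p_l (R_r^* ψ ⊗ e_r)`,
realized as an operator on `H^{⊗(m+k)}` (with `l = m + k`). -/
def Vml (H : ∀ m, Submodule ℂ (TP n m)) (Q : TP n 1 →L[ℂ] TP n 1) (m k : ℕ) :
    TP n (m + k) →L[ℂ] TP n (m + k) :=
  lamC H Q m k • ∑ r : Wd n k,
    prj H (m + k) ∘L tensR (EuclideanSpace.single r 1) ∘L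
      ContinuousLinearMap.adjoint (rshW H m k r)

/-- The claimed adjoint `V_{m,l}^* = √(⋯) (ρ^{(l)})^{-1}(ρ^{(m)} ⊗ ρ^{(l-m)})`. -/
def VmlStar (H : ∀ m, Submodule ℂ (TP n m)) (Q : TP n 1 →L[ℂ] TP n 1) (m k : ℕ) :
    TP n (m + k) →L[ℂ] TP n (m + k) :=
  lamC H Q m k •
    (extOp H (trQ H Q (m + k) • Ring.inverse (cmpOp H (tpow Q (m + k)))) ∘L
      opT (rhoExt H Q m) (rhoExt H Q k))

/-- The adjoint, with instances supplied explicitly. -/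
def adjC {E F : Type*} [NormedAddCommGroup E] [NormedAddCommGroup F]
    [InnerProductSpace ℂ E] [InnerProductSpace ℂ F] [CompleteSpace E] [CompleteSpace F]
    (T : E →L[ℂ] F) : F →L[ℂ] E :=
  @ContinuousLinearMap.adjoint ℂ E F _ _ _ _ _ _ _ T

/-- Complete positivity of a map between operator algebras on Hilbert spaces:
positive matrices over the domain are sent to positive matrices over the codomain.
(Here `Nᴴ` is written as the transpose of the entrywise adjoint.) -/
def IsCP {E F' : Type*} [NormedAddCommGroup E] [InnerProductSpace ℂ E] [CompleteSpace E]
    [NormedAddCommGroup F'] [InnerProductSpace ℂ F'] [CompleteSpace F']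
    (Φ : (E →L[ℂ] E) → (F' →L[ℂ] F')) : Prop :=
  ∀ (d : ℕ) (M : Matrix (Fin d) (Fin d) (E →L[ℂ] E)),
    (∃ N : Matrix (Fin d) (Fin d) (E →L[ℂ] E), M = (N.map fun T => adjC T)ᵀ * N) →
    ∃ N' : Matrix (Fin d) (Fin d) (F' →L[ℂ] F'), M.map Φ = (N'.map fun T => adjC T)ᵀ * N'

/-- The vacuum vector `Ω ∈ H^{⊗0} = ℂ`. -/
def vac (n : ℕ) : TP n 0 := EuclideanSpace.single default 1

/-- The symmetric subspace `H^{∨m} ⊆ H^{⊗m}`. -/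
def symSub (n m : ℕ) : Submodule ℂ (TP n m) where
  carrier := {x | ∀ (σ : Equiv.Perm (Fin m)) (w : Wd n m), x (w ∘ σ) = x w}
  add_mem' := by
    intro a b ha hb σ w
    show (a + b) (w ∘ σ) = (a + b) w
    simp only [PiLp.add_apply, ha σ w, hb σ w]
  zero_mem' := by
    intro σ w
    show (0 : TP n m) (w ∘ σ) = (0 : TP n m) w
    simp
  smul_mem' := by
    intro c x hx σ w
    show (c • x) (w ∘ σ) = (c • x) w
    simp only [PiLp.smul_apply, hx σ w]

/-- Rank-one operator `|x⟩⟨x|`. -/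
def rankOne {F : Type*} [NormedAddCommGroup F] [InnerProductSpace ℂ F] (x : F) :
    F →L[ℂ] F :=
  (innerSL ℂ x).smulRight x

end
set_option linter.unusedSectionVars false
section AuxToolkit
open ContinuousLinearMap
noncomputable section

variable {n : ℕ}

/-- Rectangular matrix entry. -/
def entR {ι κ : Type} [Fintype ι] [Fintype κ] [DecidableEq ι] [DecidableEq κ]
    (A : EuclideanSpace ℂ κ →L[ℂ] EuclideanSpace ℂ ι) (w : ι) (v : κ) : ℂ :=
  A (EuclideanSpace.single v 1) w

variable {ι κ τ : Type} [Fintype ι] [Fintype κ] [Fintype τ]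
  [DecidableEq ι] [DecidableEq κ] [DecidableEq τ]

lemma coord_sum {α : Type} (s : Finset α) (f : α → EuclideanSpace ℂ κ) (w : κ) :
    (∑ i ∈ s, f i) w = ∑ i ∈ s, f i w := by
  classical
  induction s using Finset.induction_on with
  | empty => rfl
  | insert a s h ih => rw [Finset.sum_insert h, Finset.sum_insert h, ← ih]; rfl

lemma euclid_decomp (x : EuclideanSpace ℂ κ) :
    x = ∑ v, x v • EuclideanSpace.single v 1 := by
  ext w
  rw [coord_sum]
  simp [EuclideanSpace.single_apply]

lemma apply_entR (A : EuclideanSpace ℂ κ →L[ℂ] EuclideanSpace ℂ ι) (x : EuclideanSpace ℂ κ)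
    (w : ι) : A x w = ∑ v, entR A w v * x v := by
  conv_lhs => rw [euclid_decomp x]
  rw [map_sum, coord_sum]
  refine Finset.sum_congr rfl fun v _ => ?_
  rw [map_smul]
  show x v * A (EuclideanSpace.single v 1) w = entR A w v * x v
  exact mul_comm _ _

lemma clm_ext_entR {A B : EuclideanSpace ℂ κ →L[ℂ] EuclideanSpace ℂ ι}
    (h : ∀ w v, entR A w v = entR B w v) : A = B := by
  refine ContinuousLinearMap.ext fun x => ?_
  ext w
  rw [apply_entR, apply_entR]
  exact Finset.sum_congr rfl fun v _ => by rw [h]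

lemma entR_ofMatR (M : Matrix ι κ ℂ) : ∀ w v, entR (ofMatR M) w v = M w v := by
  intro w v
  show (Matrix.toEuclideanLin M) (EuclideanSpace.single v 1) w = M w v
  rw [Matrix.toEuclideanLin_apply]
  show Matrix.mulVec M _ w = M w v
  simp [Matrix.mulVec, dotProduct, EuclideanSpace.single_apply]

lemma entR_comp (A : EuclideanSpace ℂ κ →L[ℂ] EuclideanSpace ℂ ι)
    (B : EuclideanSpace ℂ τ →L[ℂ] EuclideanSpace ℂ κ) (w v) :
    entR (A ∘L B) w v = ∑ u, entR A w u * entR B u v := by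
  show A (B (EuclideanSpace.single v 1)) w = _
  rw [apply_entR]
  rfl

lemma single_coord (x : EuclideanSpace ℂ κ) (v : κ) :
    x v = inner (𝕜 := ℂ) (EuclideanSpace.single v 1) x := by
  rw [EuclideanSpace.inner_single_left]; simp

lemma entR_adjoint (A : EuclideanSpace ℂ κ →L[ℂ] EuclideanSpace ℂ ι) (w v) :
    entR (ContinuousLinearMap.adjoint A) w v = starRingEnd ℂ (entR A v w) := by
  show (ContinuousLinearMap.adjoint A) (EuclideanSpace.single v 1) w = _
  rw [single_coord ((ContinuousLinearMap.adjoint A) (EuclideanSpace.single v 1)) w,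
    ContinuousLinearMap.adjoint_inner_right, ← inner_conj_symm,
    ← single_coord (A (EuclideanSpace.single w 1)) v]
  rfl

lemma entR_smul (c : ℂ) (A : EuclideanSpace ℂ κ →L[ℂ] EuclideanSpace ℂ ι) (w v) :
    entR (c • A) w v = c * entR A w v := rfl

lemma entR_sum {α : Type} (s : Finset α) (f : α → (EuclideanSpace ℂ κ →L[ℂ] EuclideanSpace ℂ ι))
    (w v) : entR (∑ i ∈ s, f i) w v = ∑ i ∈ s, entR (f i) w v := by
  have : (∑ i ∈ s, f i) (EuclideanSpace.single v 1) = ∑ i ∈ s, f i (EuclideanSpace.single v 1) := by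
    simp [ContinuousLinearMap.sum_apply]
  show (∑ i ∈ s, f i) (EuclideanSpace.single v 1) w = _
  rw [this, coord_sum]
  rfl

lemma entR_id (w v : κ) :
    entR (ContinuousLinearMap.id ℂ (EuclideanSpace ℂ κ)) w v = if w = v then 1 else 0 := by
  show EuclideanSpace.single v 1 w = _
  simp [EuclideanSpace.single_apply]

end
end AuxToolkit
set_option linter.unusedSectionVars false
section Aux2
open ContinuousLinearMap
noncomputable section
variable {n m k : ℕ}

lemma wfst_append (a : Wd n m) (b : Wd n k) : wfst (Fin.append a b) = a := by
  funext i; simp [wfst]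

lemma wsnd_append (a : Wd n m) (b : Wd n k) : wsnd (Fin.append a b) = b := by
  funext i; simp [wsnd]

lemma append_wfst_wsnd (w : Wd n (m + k)) : Fin.append (wfst w) (wsnd w) = w := by
  funext i
  refine Fin.addCases (motive := fun i => Fin.append (wfst w) (wsnd w) i = w i) ?_ ?_ i
  · intro j; simp [wfst]
  · intro j; simp [wsnd]

def wEquiv (n m k : ℕ) : (Wd n m × Wd n k) ≃ Wd n (m + k) where
  toFun p := Fin.append p.1 p.2
  invFun w := (wfst w, wsnd w)
  left_inv p := by simp [wfst_append, wsnd_append]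
  right_inv w := append_wfst_wsnd w

lemma sum_words (f : Wd n (m + k) → ℂ) :
    ∑ w, f w = ∑ a : Wd n m, ∑ b : Wd n k, f (Fin.append a b) := by
  rw [← Equiv.sum_comp (wEquiv n m k) f, Fintype.sum_prod_type]
  rfl

lemma entR_opT (A : TP n m →L[ℂ] TP n m) (B : TP n k →L[ℂ] TP n k) (w v : Wd n (m + k)) :
    entR (opT A B) w v = entR A (wfst w) (wfst v) * entR B (wsnd w) (wsnd v) :=
  entR_ofMatR _ w v

lemma opT_comp (A A' : TP n m →L[ℂ] TP n m) (B B' : TP n k →L[ℂ] TP n k) :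
    opT A B ∘L opT A' B' = opT (A ∘L A') (B ∘L B') := by
  refine clm_ext_entR fun w v => ?_
  rw [entR_comp, entR_opT, entR_comp, entR_comp, sum_words, Finset.sum_mul_sum]
  refine Finset.sum_congr rfl fun a _ => Finset.sum_congr rfl fun b _ => ?_
  rw [entR_opT, entR_opT, wfst_append, wsnd_append]
  ring

lemma opT_adjoint (A : TP n m →L[ℂ] TP n m) (B : TP n k →L[ℂ] TP n k) :
    ContinuousLinearMap.adjoint (opT A B) =
      opT (ContinuousLinearMap.adjoint A) (ContinuousLinearMap.adjoint B) := by
  refine clm_ext_entR fun w v => ?_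
  rw [entR_adjoint, entR_opT, entR_opT, entR_adjoint, entR_adjoint, map_mul]

lemma opT_smul_smul (c d : ℂ) (A : TP n m →L[ℂ] TP n m) (B : TP n k →L[ℂ] TP n k) :
    opT (c • A) (d • B) = (c * d) • opT A B := by
  refine clm_ext_entR fun w v => ?_
  rw [entR_smul, entR_opT, entR_opT, entR_smul, entR_smul]
  ring

lemma tmul_apply (x : TP n m) (y : TP n k) (w : Wd n (m + k)) :
    tmul x y w = x (wfst w) * y (wsnd w) := rfl

lemma opT_tmul (A : TP n m →L[ℂ] TP n m) (B : TP n k →L[ℂ] TP n k) (x : TP n m) (y : TP n k) :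
    opT A B (tmul x y) = tmul (A x) (B y) := by
  ext w
  rw [apply_entR, tmul_apply, apply_entR, apply_entR, Finset.sum_mul_sum, sum_words]
  refine Finset.sum_congr rfl fun a _ => Finset.sum_congr rfl fun b _ => ?_
  rw [entR_opT, wfst_append, wsnd_append, tmul_apply, wfst_append, wsnd_append]
  ring

lemma entR_tensR (y : TP n k) (w : Wd n (m + k)) (v : Wd n m) :
    entR (tensR y) w v = if wfst w = v then y (wsnd w) else 0 :=
  entR_ofMatR _ w v

lemma entR_tensRC (r : Wd n k) (w : Wd n (m + k)) (v : Wd n m) :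
    entR (tensR (n := n) (EuclideanSpace.single r 1)) w v
      = if wfst w = v ∧ wsnd w = r then 1 else 0 := by
  rw [entR_tensR, EuclideanSpace.single_apply]
  by_cases h1 : wfst w = v <;> by_cases h2 : wsnd w = r <;> simp [h1, h2]

lemma entR_tensR_conj (B : TP n m →L[ℂ] TP n m) (r : Wd n k) (w v : Wd n (m + k)) :
    entR (tensR (EuclideanSpace.single r 1) ∘L B ∘L
        ContinuousLinearMap.adjoint (tensR (n := n) (m := m) (EuclideanSpace.single r 1))) w v
      = (if wsnd w = r then 1 else 0) * (if wsnd v = r then 1 else 0)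
          * entR B (wfst w) (wfst v) := by
  simp only [entR_comp, entR_adjoint, entR_tensRC, apply_ite (starRingEnd ℂ), map_one,
    map_zero, ite_and]
  simp only [mul_ite, ite_mul, mul_zero, zero_mul, mul_one, one_mul, Finset.sum_ite_eq,
    Finset.sum_ite_eq', Finset.sum_ite_irrel, Finset.sum_const_zero, Finset.mem_univ,
    if_true]

lemma sum_tensR_conj (B : TP n m →L[ℂ] TP n m) :
    ∑ r : Wd n k, tensR (EuclideanSpace.single r 1) ∘L B ∘L
        ContinuousLinearMap.adjoint (tensR (n := n) (m := m) (EuclideanSpace.single r 1)) =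
      opT B (ContinuousLinearMap.id ℂ (TP n k)) := by
  refine clm_ext_entR fun w v => ?_
  rw [entR_sum, entR_opT, entR_id]
  simp only [Finset.sum_congr rfl fun r _ => entR_tensR_conj B r w v]
  simp [ite_and, Finset.sum_ite_eq, Finset.sum_ite_eq', mul_ite, ite_mul, mul_zero, zero_mul,
    eq_comm, mul_comm]

end
end Aux2
section Aux3
open ContinuousLinearMap
noncomputable section
variable {n : ℕ} (H : ∀ m, Submodule ℂ (TP n m))

lemma wcongr {a : ℕ} (w : Wd n a) {i j : Fin a} (h : i.1 = j.1) : w i = w j :=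
  congrArg w (Fin.ext h)

lemma prj_mem {a : ℕ} {x : TP n a} (hx : x ∈ H a) : prj H a x = x := by
  show (((H a).orthogonalProjectionOnto) x : TP n a) = x
  exact Submodule.starProjection_eq_self_iff.2 hx

lemma prj_apply_mem {a : ℕ} (x : TP n a) : prj H a x ∈ H a := by
  exact (((H a).orthogonalProjectionOnto) x).2

lemma prj_idem (a : ℕ) : prj H a ∘L prj H a = prj H a := by
  refine ContinuousLinearMap.ext fun x => ?_
  exact prj_mem H (prj_apply_mem H x)

lemma prj_selfadj (a : ℕ) : ContinuousLinearMap.adjoint (prj H a) = prj H a := by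
  refine ContinuousLinearMap.ext fun x => ?_
  apply ext_inner_left ℂ
  intro y
  rw [ContinuousLinearMap.adjoint_inner_right]
  show (inner ℂ ((((H a).orthogonalProjectionOnto) y : TP n a)) x : ℂ)
      = inner ℂ y (((H a).orthogonalProjectionOnto) x : TP n a)
  exact Submodule.inner_starProjection_left_eq_right _ y x

lemma orthProj_comp_subtypeL (a : ℕ) :
    (H a).orthogonalProjectionOnto ∘L (H a).subtypeL = ContinuousLinearMap.id ℂ ↥(H a) := by
  refine ContinuousLinearMap.ext fun x => ?_
  exact Submodule.orthogonalProjectionOnto_mem_subspace_eq_self x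

lemma prj_comp_subtypeL (a : ℕ) : prj H a ∘L (H a).subtypeL = (H a).subtypeL := by
  refine ContinuousLinearMap.ext fun x => ?_
  exact prj_mem H x.2

lemma orthProj_comp_prj (a : ℕ) :
    ((H a).orthogonalProjectionOnto : TP n a →L[ℂ] ↥(H a)) ∘L prj H a
      = (H a).orthogonalProjectionOnto := by
  refine ContinuousLinearMap.ext fun x => ?_
  show (H a).orthogonalProjectionOnto (((H a).orthogonalProjectionOnto x : TP n a)) = _
  exact Submodule.orthogonalProjectionOnto_mem_subspace_eq_self _

lemma absorbL (hsp : IsSubproduct H) (a b : ℕ) :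
    opT (prj H a) (ContinuousLinearMap.id ℂ (TP n b)) ∘L prj H (a + b) = prj H (a + b) := by
  have key : ∀ z ∈ tensorSub (H a) (H b),
      opT (prj H a) (ContinuousLinearMap.id ℂ (TP n b)) z = z := by
    intro z hz
    induction hz using Submodule.span_induction with
    | mem z hz =>
      obtain ⟨u, hu, y, hy, rfl⟩ := hz
      rw [opT_tmul, prj_mem H hu]
      rfl
    | zero => simp
    | add z₁ z₂ _ _ h1 h2 => rw [map_add, h1, h2]
    | smul c z _ h => rw [map_smul, h]
  refine ContinuousLinearMap.ext fun x => ?_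
  exact key _ (hsp.2 a b (prj_apply_mem H x))

lemma absorbR (hsp : IsSubproduct H) (a b : ℕ) :
    opT (ContinuousLinearMap.id ℂ (TP n a)) (prj H b) ∘L prj H (a + b) = prj H (a + b) := by
  have key : ∀ z ∈ tensorSub (H a) (H b),
      opT (ContinuousLinearMap.id ℂ (TP n a)) (prj H b) z = z := by
    intro z hz
    induction hz using Submodule.span_induction with
    | mem z hz =>
      obtain ⟨u, hu, y, hy, rfl⟩ := hz
      rw [opT_tmul, prj_mem H hy]
      rfl
    | zero => simp
    | add z₁ z₂ _ _ h1 h2 => rw [map_add, h1, h2]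
    | smul c z _ h => rw [map_smul, h]
  refine ContinuousLinearMap.ext fun x => ?_
  exact key _ (hsp.2 a b (prj_apply_mem H x))

lemma adjoint_id' {a : ℕ} : ContinuousLinearMap.adjoint (ContinuousLinearMap.id ℂ (TP n a))
    = ContinuousLinearMap.id ℂ (TP n a) := by
  refine clm_ext_entR fun w v => ?_
  rw [entR_adjoint, entR_id, entR_id]
  by_cases h : w = v
  · simp [h]
  · rw [if_neg h, if_neg (fun hh => h hh.symm), map_zero]

lemma absorbL' (hsp : IsSubproduct H) (a b : ℕ) :
    prj H (a + b) ∘L opT (prj H a) (ContinuousLinearMap.id ℂ (TP n b)) = prj H (a + b) := by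
  have := congrArg ContinuousLinearMap.adjoint (absorbL H hsp a b)
  rwa [ContinuousLinearMap.adjoint_comp, opT_adjoint, prj_selfadj, prj_selfadj,
    adjoint_id'] at this

lemma absorbR' (hsp : IsSubproduct H) (a b : ℕ) :
    prj H (a + b) ∘L opT (ContinuousLinearMap.id ℂ (TP n a)) (prj H b) = prj H (a + b) := by
  have := congrArg ContinuousLinearMap.adjoint (absorbR H hsp a b)
  rwa [ContinuousLinearMap.adjoint_comp, opT_adjoint, prj_selfadj, prj_selfadj,
    adjoint_id'] at this

lemma rc_cond {a : ℕ} (w : Wd n (a + 1)) (v : Wd n a) (j : Fin n) :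
    (w (Fin.last a) = j ∧ (fun i : Fin a => w i.castSucc) = v) ↔ w = Fin.snoc v j := by
  constructor
  · rintro ⟨h1, h2⟩
    funext i
    refine Fin.lastCases ?_ ?_ i
    · rw [Fin.snoc_last, h1]
    · intro i
      rw [Fin.snoc_castSucc, ← h2]
  · rintro rfl
    refine ⟨Fin.snoc_last _ _, funext fun i => Fin.snoc_castSucc _ _ _⟩

lemma entR_rcreate {a : ℕ} (j : Fin n) (w : Wd n (a + 1)) (v : Wd n a) :
    entR (rcreate j a) w v = if w = Fin.snoc v j then 1 else 0 := by
  rw [show rcreate j a = ofMatR (Matrix.of fun (w : Wd n (a + 1)) (v : Wd n a) =>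
    if w (Fin.last a) = j ∧ (fun i : Fin a => w i.castSucc) = v then 1 else 0) from rfl,
    entR_ofMatR]
  simp only [Matrix.of_apply, rc_cond]

lemma rcreate_comp {a : ℕ} (j : Fin n) (A : TP n a →L[ℂ] TP n a) :
    rcreate j a ∘L A = opT A (ContinuousLinearMap.id ℂ (TP n 1)) ∘L rcreate j a := by
  refine clm_ext_entR fun w v => ?_
  rw [entR_comp, entR_comp]
  have hL : ∀ u, entR (rcreate j a) w u * entR A u v
      = (if w = Fin.snoc u j then 1 else 0) * entR A u v := by
    intro u; rw [entR_rcreate]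
  have hR : ∀ u, entR (opT A (ContinuousLinearMap.id ℂ (TP n 1))) w u * entR (rcreate j a) u v
      = (if u = Fin.snoc v j then 1 else 0) *
        (entR A (wfst w) (wfst u) * entR (ContinuousLinearMap.id ℂ (TP n 1)) (wsnd w) (wsnd u)) := by
    intro u; rw [entR_opT, entR_rcreate]; ring
  rw [Finset.sum_congr rfl fun u _ => hL u, Finset.sum_congr rfl fun u _ => hR u]
  simp only [ite_mul, one_mul, zero_mul, Finset.sum_ite_eq', Finset.mem_univ, if_true]
  have h1 : wfst (Fin.snoc v j : Wd n (a + 1)) = v := by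
    funext i
    show (Fin.snoc v j : Wd n (a+1)) (Fin.castAdd 1 i) = v i
    rw [show (Fin.castAdd 1 i) = Fin.castSucc i from rfl, Fin.snoc_castSucc]
  have h2 : entR (ContinuousLinearMap.id ℂ (TP n 1)) (wsnd w) (wsnd (Fin.snoc v j : Wd n (a+1)))
      = if w (Fin.last a) = j then 1 else 0 := by
    rw [entR_id]
    have e2 : wsnd w (0:Fin 1) = w (Fin.last a) := wcongr w (by simp)
    have e3 : wsnd (Fin.snoc v j : Wd n (a+1)) (0:Fin 1)
        = (Fin.snoc v j : Wd n (a+1)) (Fin.last a) := by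
      show (Fin.snoc v j : Wd n (a+1)) (Fin.natAdd a (0:Fin 1)) = _
      exact wcongr _ (by simp)
    have e1 : wsnd w = wsnd (Fin.snoc v j : Wd n (a+1)) ↔ w (Fin.last a) = j := by
      constructor
      · intro h
        have h0 := congrFun h (0 : Fin 1)
        rw [e2, e3, Fin.snoc_last] at h0
        exact h0
      · intro h
        funext i
        rw [Subsingleton.elim i (0:Fin 1), e2, e3, Fin.snoc_last, h]
    rw [if_congr e1 rfl rfl]
  rw [h1, h2]
  have h3 : wfst w = (fun i : Fin a => w i.castSucc) := by
    funext i; exact wcongr w rfl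
  have h4 : ∀ u : Wd n a, (if w = Fin.snoc u j then entR A u v else 0)
      = if (fun i : Fin a => w i.castSucc) = u
          then (if w (Fin.last a) = j then entR A u v else 0) else 0 := by
    intro u
    rw [if_congr (Iff.symm (rc_cond w u j)) rfl rfl]
    by_cases hc1 : w (Fin.last a) = j <;>
      by_cases hc2 : (fun i : Fin a => w i.castSucc) = u <;> simp [hc1, hc2]
  rw [Finset.sum_congr rfl fun u _ => h4 u, Finset.sum_ite_eq]
  simp only [Finset.mem_univ, if_true]
  rw [h3]
  by_cases hc1 : w (Fin.last a) = j <;> simp [hc1]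

end
end Aux3
section Aux4
open ContinuousLinearMap
noncomputable section
variable {n : ℕ} (H : ∀ m, Submodule ℂ (TP n m))

lemma apply_rcreate {a : ℕ} (j : Fin n) (y : TP n a) (s : Wd n (a + 1)) :
    rcreate j a y s = if s (Fin.last a) = j then y (fun i => s i.castSucc) else 0 := by
  rw [apply_entR]
  have key : ∀ t, entR (rcreate j a) s t * y t
      = if (fun i : Fin a => s i.castSucc) = t
          then (if s (Fin.last a) = j then y t else 0) else 0 := by
    intro t
    rw [entR_rcreate, if_congr (Iff.symm (rc_cond s t j)) rfl rfl]
    by_cases h1 : s (Fin.last a) = j <;>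
      by_cases h2 : (fun i : Fin a => s i.castSucc) = t <;> simp [h1, h2]
  rw [Finset.sum_congr rfl fun t _ => key t, Finset.sum_ite_eq]
  simp

lemma rcreate_single {d : ℕ} (j : Fin n) (s : Wd n d) :
    rcreate j d (EuclideanSpace.single s 1) = EuclideanSpace.single (Fin.snoc s j) 1 := by
  ext w
  have hs : (EuclideanSpace.single (Fin.snoc s j) 1 : TP n (d+1)) w
      = if w (Fin.last d) = j ∧ (fun i : Fin d => w i.castSucc) = s then 1 else 0 := by
    rw [EuclideanSpace.single_apply, if_congr (Iff.symm (rc_cond w s j)) rfl rfl]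
  rw [apply_rcreate, hs, EuclideanSpace.single_apply, ite_and]

lemma rcreate_tensR {m d : ℕ} (j : Fin n) (y : TP n d) :
    rcreate j (m + d) ∘L tensR (n := n) (m := m) y = tensR (rcreate j d y) := by
  refine clm_ext_entR fun w v => ?_
  have hL : entR (rcreate j (m + d) ∘L tensR (n := n) (m := m) y) w v
      = rcreate j (m + d) (tensR (n := n) (m := m) y (EuclideanSpace.single v 1)) w := rfl
  rw [hL, apply_rcreate, entR_tensR]
  have h1 : ∀ u : Wd n (m + d), tensR (n := n) (m := m) y (EuclideanSpace.single v 1) u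
      = if wfst u = v then y (wsnd u) else 0 := fun u => entR_tensR y u v
  have E1 : wfst (m := m) (k := d) (fun i : Fin (m + d) => w i.castSucc)
      = wfst (m := m) (k := d + 1) w := by
    funext i; exact wcongr w rfl
  have E2 : wsnd (m := m) (k := d + 1) w (Fin.last d) = w (Fin.last (m + d)) :=
    wcongr w (by simp)
  have E3 : (fun i : Fin d => wsnd (m := m) (k := d + 1) w i.castSucc)
      = wsnd (m := m) (k := d) (fun i : Fin (m + d) => w i.castSucc) := by
    funext i; exact wcongr w rfl
  rw [h1, apply_rcreate, E1, E2, E3]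
  by_cases hc1 : w (Fin.last (m + d)) = j <;> by_cases hc2 : wfst (m := m) (k := d + 1) w = v <;> simp [hc1, hc2]

lemma tensR_empty {m : ℕ} (r : Wd n 0) :
    tensR (n := n) (m := m) (EuclideanSpace.single r 1) = ContinuousLinearMap.id ℂ (TP n m) := by
  refine clm_ext_entR fun w v => ?_
  rw [entR_tensRC]
  have hid : entR (ContinuousLinearMap.id ℂ (TP n m)) w v
      = (EuclideanSpace.single v 1 : TP n m) w := rfl
  rw [hid, EuclideanSpace.single_apply]
  have h0 : wsnd (m := m) w = r := funext fun i => i.elim0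
  have h1 : wfst (k := 0) w = w := funext fun i => wcongr w rfl
  rw [h0, h1]
  simp

lemma collapse (hsp : IsSubproduct H) (m : ℕ) : ∀ (d : ℕ) (r : Wd n d),
    prj H (m + d) ∘L rshW H m d r
      = prj H (m + d) ∘L tensR (EuclideanSpace.single r 1) ∘L prj H m := by
  intro d
  induction d with
  | zero =>
    intro r
    rw [show rshW H m 0 r = ContinuousLinearMap.id ℂ (TP n m) from rfl, tensR_empty,
      ContinuousLinearMap.comp_id, ContinuousLinearMap.id_comp]
    exact (prj_idem H m).symm
  | succ d IH =>
    intro r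
    refine ContinuousLinearMap.ext fun x => ?_
    have lhs1 : (prj H (m + (d+1)) ∘L rshW H m (d+1) r) x
        = prj H (m + (d+1)) (prj H (m + (d+1)) (rcreate (r (Fin.last d)) (m + d)
            (prj H (m + d) (rshW H m d (Fin.init r) x)))) := rfl
    rw [lhs1, prj_mem H (prj_apply_mem H _)]
    have h2 : prj H (m + d) (rshW H m d (Fin.init r) x)
        = prj H (m + d) (tensR (EuclideanSpace.single (Fin.init r) 1) (prj H m x)) := by
      have := DFunLike.congr_fun (IH (Fin.init r)) x
      exact this
    rw [h2]
    set y := tensR (EuclideanSpace.single (Fin.init r) 1) (prj H m x) with hy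
    have h3 : rcreate (r (Fin.last d)) (m + d) (prj H (m + d) y)
        = opT (prj H (m + d)) (ContinuousLinearMap.id ℂ (TP n 1))
            (rcreate (r (Fin.last d)) (m + d) y) :=
      DFunLike.congr_fun (rcreate_comp (r (Fin.last d)) (prj H (m + d))) y
    rw [h3]
    have h4 : prj H (m + (d+1)) (opT (prj H (m + d)) (ContinuousLinearMap.id ℂ (TP n 1))
          (rcreate (r (Fin.last d)) (m + d) y))
        = prj H (m + (d+1)) (rcreate (r (Fin.last d)) (m + d) y) :=
      DFunLike.congr_fun (absorbL' H hsp (m + d) 1) _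
    rw [h4, hy]
    have h5 : rcreate (r (Fin.last d)) (m + d)
          (tensR (EuclideanSpace.single (Fin.init r) 1) (prj H m x))
        = tensR (rcreate (r (Fin.last d)) d (EuclideanSpace.single (Fin.init r) 1))
            (prj H m x) :=
      DFunLike.congr_fun (rcreate_tensR (r (Fin.last d)) (EuclideanSpace.single (Fin.init r) 1)) _
    rw [h5, rcreate_single, Fin.snoc_init_self]
    rfl

end
end Aux4
set_option maxHeartbeats 1000000
section Aux5
open ContinuousLinearMap
noncomputable section
variable {n : ℕ} (H : ∀ m, Submodule ℂ (TP n m)) (Q : TP n 1 →L[ℂ] TP n 1)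

lemma entR_tpow (a : ℕ) (w v : Wd n a) :
    entR (tpow Q a) w v = ∏ i, ent Q (letter (w i)) (letter (v i)) :=
  entR_ofMatR _ w v

lemma ent_conj (hsa : IsSelfAdjoint Q) (w v : Wd n 1) :
    starRingEnd ℂ (entR Q w v) = entR Q v w := by
  have h : ContinuousLinearMap.adjoint Q = Q := by
    rw [← ContinuousLinearMap.star_eq_adjoint]; exact hsa
  have h2 := entR_adjoint Q v w
  rw [h] at h2
  rw [← h2]

lemma tpow_selfadj (hsa : IsSelfAdjoint Q) (a : ℕ) :
    ContinuousLinearMap.adjoint (tpow Q a) = tpow Q a := by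
  refine clm_ext_entR fun w v => ?_
  rw [entR_adjoint, entR_tpow, entR_tpow, map_prod]
  exact Finset.prod_congr rfl fun i _ => ent_conj Q hsa _ _

lemma opT_tpow (m k : ℕ) : opT (tpow Q m) (tpow Q k) = tpow Q (m + k) := by
  refine clm_ext_entR fun w v => ?_
  rw [entR_opT, entR_tpow, entR_tpow, entR_tpow, Fin.prod_univ_add]
  rfl

lemma entR_tpow_diag (hdiag : ∀ i j : Fin n, i ≠ j → ent Q (letter i) (letter j) = 0)
    (a : ℕ) (w v : Wd n a) :
    entR (tpow Q a) w v = if w = v then Qdg Q w else 0 := by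
  rw [entR_tpow]
  by_cases h : w = v
  · subst h; rw [if_pos rfl]; rfl
  · rw [if_neg h]
    have hex : ∃ i, w i ≠ v i := by
      by_contra hc; push_neg at hc; exact h (funext hc)
    obtain ⟨i, hi⟩ := hex
    exact Finset.prod_eq_zero (Finset.mem_univ i) (hdiag _ _ hi)

lemma q_pos (hpos : Q.IsPositive) (hinv : IsUnit Q)
    (hdiag : ∀ i j : Fin n, i ≠ j → ent Q (letter i) (letter j) = 0) (j : Fin n) :
    0 < (ent Q (letter j) (letter j)).re ∧ (ent Q (letter j) (letter j)).im = 0 := by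
  set q := ent Q (letter j) (letter j) with hqdef
  set x : TP n 1 := EuclideanSpace.single (letter j) 1 with hx
  have him : q.im = 0 := by
    rw [← Complex.conj_eq_iff_im]
    exact ent_conj Q hpos.isSelfAdjoint _ _
  have hinner : (inner ℂ x (Q x) : ℂ) = q := by
    rw [hx, EuclideanSpace.inner_single_left]
    simp only [map_one, one_mul]
    rfl
  have hge : 0 ≤ q.re := by
    have h2 := hpos.2 x
    rw [ContinuousLinearMap.reApplyInnerSelf_apply] at h2
    have h3 : (inner ℂ (Q x) x : ℂ) = starRingEnd ℂ q := by
      rw [← inner_conj_symm, hinner]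
    rw [h3] at h2
    simpa using h2
  have hne : q ≠ 0 := by
    intro h0
    have hQx : Q x = 0 := by
      ext w
      rw [apply_entR]
      have hw : ∀ v, entR Q w v * x v = if (letter j : Wd n 1) = v then entR Q w v else 0 := by
        intro v
        rw [hx]
        show entR Q w v * EuclideanSpace.single (letter j) 1 v = _
        rw [EuclideanSpace.single_apply]
        by_cases h : v = letter j
        · subst h; simp
        · rw [if_neg h, if_neg (fun hh => h hh.symm), mul_zero]
      rw [Finset.sum_congr rfl fun v _ => hw v, Finset.sum_ite_eq]
      simp only [Finset.mem_univ, if_true]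
      have hwl : w = letter (w 0) := funext fun i => by
        rw [Subsingleton.elim i (0 : Fin 1)]; rfl
      by_cases hj : w 0 = j
      · have hwj : w = letter j := by rw [hwl, hj]
        rw [hwj]
        show q = (0 : TP n 1) (letter j)
        rw [h0]
        rfl
      · rw [hwl]
        show ent Q (letter (w 0)) (letter j) = (0 : TP n 1) w
        rw [hdiag _ _ hj]
        rfl
    obtain ⟨u, hu⟩ := hinv
    have hxz : x = 0 := by
      have h1 : ∀ z, ((↑u⁻¹ : TP n 1 →L[ℂ] TP n 1)) (Q z) = z := by
        intro z
        have := DFunLike.congr_fun u.inv_mul z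
        rw [ContinuousLinearMap.mul_apply, ContinuousLinearMap.one_apply, hu] at this
        exact this
      have := h1 x
      rw [hQx, map_zero] at this
      exact this.symm
    have : x (letter j) = 0 := by rw [hxz]; rfl
    rw [hx] at this
    simp [EuclideanSpace.single_apply] at this
  refine ⟨lt_of_le_of_ne hge ?_, him⟩
  intro h0
  exact hne (Complex.ext h0.symm him)

/-- Real diagonal value of `Q^{⊗a}`. -/
def dgre (a : ℕ) (w : Wd n a) : ℝ := ∏ i, (ent Q (letter (w i)) (letter (w i))).re

lemma dgre_pos (hq : ∀ j : Fin n, 0 < (ent Q (letter j) (letter j)).re ∧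
    (ent Q (letter j) (letter j)).im = 0) (a : ℕ) (w : Wd n a) : 0 < dgre Q a w :=
  Finset.prod_pos fun i _ => (hq (w i)).1

lemma Qdg_eq_re (hq : ∀ j : Fin n, 0 < (ent Q (letter j) (letter j)).re ∧
    (ent Q (letter j) (letter j)).im = 0) (a : ℕ) (w : Wd n a) :
    Qdg Q w = ((dgre Q a w : ℝ) : ℂ) := by
  rw [Qdg, dgre, Complex.ofReal_prod]
  refine Finset.prod_congr rfl fun i _ => ?_
  exact Complex.ext rfl (hq (w i)).2

lemma tpow_apply_diag (hdiag : ∀ i j : Fin n, i ≠ j → ent Q (letter i) (letter j) = 0)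
    (a : ℕ) (x : TP n a) (w : Wd n a) : tpow Q a x w = Qdg Q w * x w := by
  rw [apply_entR]
  have hterm : ∀ v, entR (tpow Q a) w v * x v
      = if w = v then Qdg Q w * x v else 0 := by
    intro v
    rw [entR_tpow_diag Q hdiag]
    by_cases h : w = v <;> simp [h]
  rw [Finset.sum_congr rfl fun v _ => hterm v, Finset.sum_ite_eq]
  simp

lemma Qdg_ne_zero (hq : ∀ j : Fin n, 0 < (ent Q (letter j) (letter j)).re ∧
    (ent Q (letter j) (letter j)).im = 0) (a : ℕ) (w : Wd n a) : Qdg Q w ≠ 0 := by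
  rw [Qdg_eq_re Q hq a w]
  simp only [ne_eq, Complex.ofReal_eq_zero]
  exact ne_of_gt (dgre_pos Q hq a w)

lemma clm_eq_ofMatR {a : ℕ} (f : TP n a →L[ℂ] TP n a) :
    f = ofMatR (Matrix.of fun w v => entR f w v) := by
  refine clm_ext_entR fun w v => ?_
  rw [entR_ofMatR]
  rfl

lemma trOp_ofMatR {a : ℕ} (M : Matrix (Wd n a) (Wd n a) ℂ) :
    trOp (ofMatR M) = Matrix.trace M := by
  have h : (ofMatR M).toLinearMap = Matrix.toEuclideanLin M := rfl
  rw [trOp, h, Matrix.toEuclideanLin_eq_toLin,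
    LinearMap.trace_eq_matrix_trace ℂ (PiLp.basisFun 2 ℂ (Wd n a)), LinearMap.toMatrix_toLin]

lemma trOp_eq_sum {a : ℕ} (f : TP n a →L[ℂ] TP n a) :
    trOp f = ∑ w, entR f w w := by
  conv_lhs => rw [clm_eq_ofMatR f]
  rw [trOp_ofMatR, Matrix.trace]
  rfl

lemma trQ_eq_ambient (a : ℕ) : trQ H Q a = trOp (tpow Q a ∘L prj H a) := by
  have h1 : trQ H Q a = LinearMap.trace ℂ ↥(H a)
      (((H a).orthogonalProjectionOnto).toLinearMap.comp
        ((tpow Q a ∘L (H a).subtypeL)).toLinearMap) := rfl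
  have h2 : trOp (tpow Q a ∘L prj H a) = LinearMap.trace ℂ (TP n a)
      (((tpow Q a ∘L (H a).subtypeL)).toLinearMap.comp
        ((H a).orthogonalProjectionOnto).toLinearMap) := rfl
  rw [h1, h2, LinearMap.trace_comp_comm']

lemma entR_prj_diag (a : ℕ) (w : Wd n a) :
    entR (prj H a) w w = ((∑ v, Complex.normSq (entR (prj H a) w v) : ℝ) : ℂ) := by
  conv_lhs => rw [← prj_idem H a]
  rw [entR_comp, Complex.ofReal_sum]
  refine Finset.sum_congr rfl fun v _ => ?_
  have hadj : entR (prj H a) v w = starRingEnd ℂ (entR (prj H a) w v) := by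
    rw [← entR_adjoint, prj_selfadj]
  rw [hadj, Complex.mul_conj]

lemma trQ_eq_diag (hdiag : ∀ i j : Fin n, i ≠ j → ent Q (letter i) (letter j) = 0) (a : ℕ) :
    trQ H Q a = ∑ w, Qdg Q w * entR (prj H a) w w := by
  rw [trQ_eq_ambient, trOp_eq_sum]
  refine Finset.sum_congr rfl fun w _ => ?_
  rw [entR_comp]
  have hterm : ∀ v, entR (tpow Q a) w v * entR (prj H a) v w
      = if w = v then Qdg Q w * entR (prj H a) v w else 0 := by
    intro v
    rw [entR_tpow_diag Q hdiag]
    by_cases h : w = v <;> simp [h]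
  rw [Finset.sum_congr rfl fun v _ => hterm v, Finset.sum_ite_eq]
  simp

lemma trQ_re_pos (hq : ∀ j : Fin n, 0 < (ent Q (letter j) (letter j)).re ∧
      (ent Q (letter j) (letter j)).im = 0)
    (hdiag : ∀ i j : Fin n, i ≠ j → ent Q (letter i) (letter j) = 0)
    {a : ℕ} (hH : H a ≠ ⊥) : 0 < (trQ H Q a).re := by
  rw [trQ_eq_diag H Q hdiag, Complex.re_sum]
  have hterm : ∀ w, (Qdg Q w * entR (prj H a) w w).re
      = dgre Q a w * ∑ v, Complex.normSq (entR (prj H a) w v) := by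
    intro w
    rw [Qdg_eq_re Q hq, entR_prj_diag H a w, ← Complex.ofReal_mul, Complex.ofReal_re]
  rw [Finset.sum_congr rfl fun w _ => hterm w]
  obtain ⟨x, hxH, hxne⟩ := (Submodule.ne_bot_iff (H a)).1 hH
  have hprj : prj H a x = x := prj_mem H hxH
  have hxw : ∃ w, x w ≠ 0 := by
    by_contra hc
    push_neg at hc
    exact hxne (by ext w; exact hc w)
  obtain ⟨w0, hw0⟩ := hxw
  refine Finset.sum_pos' (fun w _ => ?_) ⟨w0, Finset.mem_univ w0, ?_⟩
  · exact mul_nonneg (le_of_lt (dgre_pos Q hq a w))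
      (Finset.sum_nonneg fun v _ => Complex.normSq_nonneg _)
  · refine mul_pos (dgre_pos Q hq a w0) ?_
    have hnn : ∀ v ∈ Finset.univ, 0 ≤ Complex.normSq (entR (prj H a) w0 v) :=
      fun v _ => Complex.normSq_nonneg _
    rcases lt_or_eq_of_le (Finset.sum_nonneg hnn) with h | h
    · exact h
    · exfalso
      have hall := (Finset.sum_eq_zero_iff_of_nonneg hnn).1 h.symm
      have hzero : ∀ v, entR (prj H a) w0 v = 0 := by
        intro v
        have := hall v (Finset.mem_univ v)
        exact Complex.normSq_eq_zero.1 this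
      have : prj H a x w0 = 0 := by
        rw [apply_entR]
        exact Finset.sum_eq_zero fun v _ => by rw [hzero v, zero_mul]
      rw [hprj] at this
      exact hw0 this

lemma trQ_ne_zero (hq : ∀ j : Fin n, 0 < (ent Q (letter j) (letter j)).re ∧
      (ent Q (letter j) (letter j)).im = 0)
    (hdiag : ∀ i j : Fin n, i ≠ j → ent Q (letter i) (letter j) = 0)
    {a : ℕ} (hH : H a ≠ ⊥) : trQ H Q a ≠ 0 := by
  intro h0
  have := trQ_re_pos H Q hq hdiag hH
  rw [h0] at this
  simp at this

lemma tpow_injective (hq : ∀ j : Fin n, 0 < (ent Q (letter j) (letter j)).re ∧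
      (ent Q (letter j) (letter j)).im = 0)
    (hdiag : ∀ i j : Fin n, i ≠ j → ent Q (letter i) (letter j) = 0)
    (a : ℕ) {y : TP n a} (hy : tpow Q a y = 0) : y = 0 := by
  ext w
  have h1 : tpow Q a y w = 0 := by rw [hy]; rfl
  rw [tpow_apply_diag Q hdiag] at h1
  have := Qdg_ne_zero Q hq a w
  have := mul_eq_zero.1 h1
  tauto

lemma cmp_tpow_isUnit (hq : ∀ j : Fin n, 0 < (ent Q (letter j) (letter j)).re ∧
      (ent Q (letter j) (letter j)).im = 0)
    (hdiag : ∀ i j : Fin n, i ≠ j → ent Q (letter i) (letter j) = 0)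
    (a : ℕ) (hpres : prj H a ∘L tpow Q a ∘L prj H a = tpow Q a ∘L prj H a) :
    IsUnit (cmpOp H (tpow Q a)) := by
  set f := cmpOp H (tpow Q a) with hf
  have hinj : Function.Injective f := by
    rw [injective_iff_map_eq_zero]
    intro x hx0
    have h1 : prj H a (tpow Q a (x : TP n a)) = (H a).subtypeL (f x) := rfl
    rw [hx0, map_zero] at h1
    have h2 : (x : TP n a) = prj H a (x : TP n a) := (prj_mem H x.2).symm
    have h3 : prj H a (tpow Q a (prj H a (x : TP n a)))
        = tpow Q a (prj H a (x : TP n a)) := DFunLike.congr_fun hpres (x : TP n a)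
    rw [← h2] at h3
    rw [h3] at h1
    have h4 : (x : TP n a) = 0 := tpow_injective Q hq hdiag a h1
    exact Subtype.ext h4
  have hbij : Function.Bijective f.toLinearMap :=
    ⟨hinj, LinearMap.injective_iff_surjective.mp hinj⟩
  let e := LinearEquiv.ofBijective f.toLinearMap hbij
  let eC := LinearEquiv.toContinuousLinearEquiv e
  have hco : ∀ x, eC x = f x := fun x => rfl
  refine ⟨⟨f, (eC.symm : ↥(H a) →L[ℂ] ↥(H a)), ?_, ?_⟩, rfl⟩
  · refine ContinuousLinearMap.ext fun x => ?_
    rw [ContinuousLinearMap.mul_apply, ContinuousLinearMap.one_apply]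
    show f (eC.symm x) = x
    rw [← hco, eC.apply_symm_apply]
  · refine ContinuousLinearMap.ext fun x => ?_
    rw [ContinuousLinearMap.mul_apply, ContinuousLinearMap.one_apply]
    show eC.symm (f x) = x
    rw [← hco, eC.symm_apply_apply]

end
end Aux5
set_option maxHeartbeats 1000000
section Aux6
open ContinuousLinearMap
noncomputable section
variable {n : ℕ} (H : ∀ m, Submodule ℂ (TP n m)) (Q : TP n 1 →L[ℂ] TP n 1)

lemma prj_extOp {a : ℕ} (A : ↥(H a) →L[ℂ] ↥(H a)) :
    prj H a ∘L extOp H A = extOp H A := by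
  refine ContinuousLinearMap.ext fun x => ?_
  exact prj_mem H ((A ((H a).orthogonalProjectionOnto x)).2)

lemma extOp_prj {a : ℕ} (A : ↥(H a) →L[ℂ] ↥(H a)) :
    extOp H A ∘L prj H a = extOp H A := by
  refine ContinuousLinearMap.ext fun x => ?_
  show (H a).subtypeL (A ((H a).orthogonalProjectionOnto (prj H a x)))
    = (H a).subtypeL (A ((H a).orthogonalProjectionOnto x))
  have h := DFunLike.congr_fun (orthProj_comp_prj H a) x
  rw [ContinuousLinearMap.comp_apply] at h
  rw [h]

lemma extOp_smul {a : ℕ} (c : ℂ) (A : ↥(H a) →L[ℂ] ↥(H a)) :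
    extOp H (c • A) = c • extOp H A := by
  refine ContinuousLinearMap.ext fun x => ?_
  show (H a).subtypeL ((c • A) ((H a).orthogonalProjectionOnto x)) = _
  rw [ContinuousLinearMap.smul_apply, map_smul]
  rfl

lemma pi_extOp {a : ℕ} (A : ↥(H a) →L[ℂ] ↥(H a)) (u : TP n a) :
    (H a).orthogonalProjectionOnto (extOp H A u)
      = A ((H a).orthogonalProjectionOnto u) := by
  show (H a).orthogonalProjectionOnto ((H a).subtypeL (A ((H a).orthogonalProjectionOnto u))) = _
  exact Submodule.orthogonalProjectionOnto_mem_subspace_eq_self _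

lemma prj_tpow_comm (hsa : IsSelfAdjoint Q) {a : ℕ}
    (hp : prj H a ∘L tpow Q a ∘L prj H a = tpow Q a ∘L prj H a) :
    prj H a ∘L tpow Q a = tpow Q a ∘L prj H a := by
  have h2 := congrArg ContinuousLinearMap.adjoint hp
  rw [ContinuousLinearMap.adjoint_comp, ContinuousLinearMap.adjoint_comp, prj_selfadj,
    tpow_selfadj Q hsa] at h2
  -- h2 : (pm ∘L Tm) ∘L pm = pm ∘L Tm
  calc prj H a ∘L tpow Q a = (prj H a ∘L tpow Q a) ∘L prj H a := h2.symm
    _ = prj H a ∘L (tpow Q a ∘L prj H a) := ContinuousLinearMap.comp_assoc _ _ _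
    _ = tpow Q a ∘L prj H a := hp

lemma adj_rshW_pl (hsp : IsSubproduct H) (m k : ℕ) (r : Wd n k) :
    ContinuousLinearMap.adjoint (rshW H m k r) ∘L prj H (m + k)
      = (prj H m ∘L ContinuousLinearMap.adjoint
          (tensR (n := n) (m := m) (EuclideanSpace.single r 1))) ∘L prj H (m + k) := by
  have h1 := congrArg ContinuousLinearMap.adjoint (collapse H hsp m k r)
  rw [ContinuousLinearMap.adjoint_comp, prj_selfadj] at h1
  rw [h1, ContinuousLinearMap.adjoint_comp, ContinuousLinearMap.adjoint_comp, prj_selfadj,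
    prj_selfadj]

/-- Index translation `opTG = opT` for `l = m + k`. -/
lemma opTG_eq_opT {m k : ℕ} (B : TP n m →L[ℂ] TP n m) :
    opTG (Nat.le_add_right m k) B (ContinuousLinearMap.id ℂ (TP n (m + k - m)))
      = opT B (ContinuousLinearMap.id ℂ (TP n k)) := by
  have h1 : opTG (Nat.le_add_right m k) B (ContinuousLinearMap.id ℂ (TP n (m + k - m)))
      = ofMatR (Matrix.of fun w v => ent B (tk (Nat.le_add_right m k) w)
          (tk (Nat.le_add_right m k) v) *
          ent (ContinuousLinearMap.id ℂ (TP n (m + k - m))) (dr m w) (dr m v)) := rfl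
  have h2 : opT B (ContinuousLinearMap.id ℂ (TP n k))
      = ofMatR (Matrix.of fun w v => ent B (wfst w) (wfst v) *
          ent (ContinuousLinearMap.id ℂ (TP n k)) (wsnd w) (wsnd v)) := rfl
  refine clm_ext_entR fun w v => ?_
  rw [h1, h2, entR_ofMatR, entR_ofMatR]
  simp only [Matrix.of_apply]
  have htk : ∀ u : Wd n (m + k), tk (Nat.le_add_right m k) u = wfst u := by
    intro u; funext i; exact wcongr u rfl
  have hid1 : ent (ContinuousLinearMap.id ℂ (TP n (m + k - m))) (dr m w) (dr m v)
      = if dr m w = dr m v then 1 else 0 := by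
    show (EuclideanSpace.single (dr m v) 1 : TP n (m + k - m)) (dr m w) = _
    rw [EuclideanSpace.single_apply]
  have hid2 : ent (ContinuousLinearMap.id ℂ (TP n k)) (wsnd w) (wsnd v)
      = if wsnd w = wsnd v then 1 else 0 := by
    show (EuclideanSpace.single (wsnd v) 1 : TP n k) (wsnd w) = _
    rw [EuclideanSpace.single_apply]
  have hiff : (dr m w = dr m v) ↔ (wsnd (m := m) w = wsnd (m := m) v) := by
    constructor
    · intro h
      funext i
      exact congrFun h ⟨i.1, by omega⟩
    · intro h
      funext i
      exact congrFun h ⟨i.1, by omega⟩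
  rw [htk w, htk v, hid1, hid2, if_congr hiff rfl rfl]

lemma tmul_zero_left {m k : ℕ} (y : TP n k) : tmul (0 : TP n m) y = 0 := by
  ext w
  show (0 : TP n m) (wfst w) * y (wsnd w) = 0
  show (0 : ℂ) * y (wsnd w) = 0
  rw [zero_mul]

lemma tmul_zero_right {m k : ℕ} (x : TP n m) : tmul x (0 : TP n k) = 0 := by
  ext w
  show x (wfst w) * (0 : TP n k) (wsnd w) = 0
  show x (wfst w) * (0 : ℂ) = 0
  rw [mul_zero]

lemma bot_prop (hsp : IsSubproduct H) {m k : ℕ} (h : H m = ⊥ ∨ H k = ⊥) :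
    H (m + k) = ⊥ := by
  rw [← le_bot_iff]
  refine le_trans (hsp.2 m k) ?_
  refine Submodule.span_le.2 ?_
  rintro z ⟨x, hx, y, hy, rfl⟩
  simp only [SetLike.mem_coe]
  cases h with
  | inl h =>
    rw [h, Submodule.mem_bot] at hx
    subst hx
    rw [tmul_zero_left]
    exact Submodule.zero_mem ⊥
  | inr h =>
    rw [h, Submodule.mem_bot] at hy
    subst hy
    rw [tmul_zero_right]
    exact Submodule.zero_mem ⊥

end
end Aux6
set_option maxHeartbeats 1000000
section Aux7
open ContinuousLinearMap
noncomputable section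
variable {n : ℕ} (H : ∀ m, Submodule ℂ (TP n m)) (Q : TP n 1 →L[ℂ] TP n 1)

lemma adj_rshW_fix (hsp : IsSubproduct H) {m k : ℕ} (r : Wd n k) {z : TP n (m + k)}
    (hz : prj H (m + k) z = z) :
    ContinuousLinearMap.adjoint (rshW H m k r) z
      = prj H m (ContinuousLinearMap.adjoint
          (tensR (n := n) (m := m) (EuclideanSpace.single r 1)) z) := by
  have h := DFunLike.congr_fun (adj_rshW_pl H hsp m k r) z
  simp only [ContinuousLinearMap.comp_apply] at h
  rw [hz] at h
  exact h

lemma mainS (hsp : IsSubproduct H) (m k : ℕ) (A : ↥(H m) →L[ℂ] ↥(H m)) :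
    cmpOp H (∑ r : Wd n k,
        rshW H m k r ∘L extOp H A ∘L ContinuousLinearMap.adjoint (rshW H m k r))
      = cmpOp H (opT (extOp H A) (ContinuousLinearMap.id ℂ (TP n k))) := by
  refine ContinuousLinearMap.ext fun x => ?_
  set z := (H (m + k)).subtypeL x with hzdef
  have hz : prj H (m + k) z = z := prj_mem H (Submodule.coe_mem x)
  have hL : (cmpOp H (∑ r : Wd n k, rshW H m k r ∘L extOp H A ∘L
        ContinuousLinearMap.adjoint (rshW H m k r))) x
      = (H (m + k)).orthogonalProjectionOnto ((∑ r : Wd n k, rshW H m k r ∘L extOp H A ∘L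
        ContinuousLinearMap.adjoint (rshW H m k r)) z) := rfl
  have hR : (cmpOp H (opT (extOp H A) (ContinuousLinearMap.id ℂ (TP n k)))) x
      = (H (m + k)).orthogonalProjectionOnto
          (opT (extOp H A) (ContinuousLinearMap.id ℂ (TP n k)) z) := rfl
  rw [hL, hR, ContinuousLinearMap.sum_apply, map_sum]
  have hterm : ∀ r : Wd n k,
      (H (m + k)).orthogonalProjectionOnto ((rshW H m k r ∘L extOp H A ∘L
        ContinuousLinearMap.adjoint (rshW H m k r)) z)
      = (H (m + k)).orthogonalProjectionOnto ((tensR (EuclideanSpace.single r 1) ∘L extOp H A ∘L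
          ContinuousLinearMap.adjoint
            (tensR (n := n) (m := m) (EuclideanSpace.single r 1))) z) := by
    intro r
    simp only [ContinuousLinearMap.comp_apply]
    rw [adj_rshW_fix H hsp r hz]
    have t2 : extOp H A (prj H m (ContinuousLinearMap.adjoint
        (tensR (n := n) (m := m) (EuclideanSpace.single r 1)) z))
        = extOp H A (ContinuousLinearMap.adjoint
            (tensR (n := n) (m := m) (EuclideanSpace.single r 1)) z) := by
      have h := DFunLike.congr_fun (extOp_prj H A) (ContinuousLinearMap.adjoint
        (tensR (n := n) (m := m) (EuclideanSpace.single r 1)) z)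
      simp only [ContinuousLinearMap.comp_apply] at h
      exact h
    rw [t2]
    set v := extOp H A (ContinuousLinearMap.adjoint
      (tensR (n := n) (m := m) (EuclideanSpace.single r 1)) z) with hvdef
    have t3 : (H (m + k)).orthogonalProjectionOnto (rshW H m k r v)
        = (H (m + k)).orthogonalProjectionOnto (prj H (m + k) (rshW H m k r v)) := by
      have h := DFunLike.congr_fun (orthProj_comp_prj H (m + k)) (rshW H m k r v)
      simp only [ContinuousLinearMap.comp_apply] at h
      exact h.symm
    have t4 : prj H (m + k) (rshW H m k r v)
        = prj H (m + k) (tensR (EuclideanSpace.single r 1) (prj H m v)) := by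
      have h := DFunLike.congr_fun (collapse H hsp m k r) v
      simp only [ContinuousLinearMap.comp_apply] at h
      exact h
    have t5 : prj H m v = v := by
      rw [hvdef]
      have h := DFunLike.congr_fun (prj_extOp H A) (ContinuousLinearMap.adjoint
        (tensR (n := n) (m := m) (EuclideanSpace.single r 1)) z)
      simp only [ContinuousLinearMap.comp_apply] at h
      exact h
    rw [t3, t4, t5]
    have h := DFunLike.congr_fun (orthProj_comp_prj H (m + k))
      (tensR (EuclideanSpace.single r 1) v)
    simp only [ContinuousLinearMap.comp_apply] at h
    rw [h]
  rw [Finset.sum_congr rfl fun r _ => hterm r, ← map_sum, ← ContinuousLinearMap.sum_apply,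
    sum_tensR_conj]

lemma Vml_fix (hsp : IsSubproduct H) {m k : ℕ} {z : TP n (m + k)}
    (hz : prj H (m + k) z = z) :
    Vml H Q m k z = lamC H Q m k • z := by
  have h0 : Vml H Q m k = lamC H Q m k • ∑ r : Wd n k,
      prj H (m + k) ∘L tensR (EuclideanSpace.single r 1) ∘L
        ContinuousLinearMap.adjoint (rshW H m k r) := rfl
  rw [h0, ContinuousLinearMap.smul_apply, ContinuousLinearMap.sum_apply]
  congr 1
  have hterm : ∀ r : Wd n k,
      (prj H (m + k) ∘L tensR (EuclideanSpace.single r 1) ∘L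
        ContinuousLinearMap.adjoint (rshW H m k r)) z
      = prj H (m + k) ((tensR (EuclideanSpace.single r 1) ∘L prj H m ∘L
          ContinuousLinearMap.adjoint
            (tensR (n := n) (m := m) (EuclideanSpace.single r 1))) z) := by
    intro r
    simp only [ContinuousLinearMap.comp_apply]
    rw [adj_rshW_fix H hsp r hz]
  rw [Finset.sum_congr rfl fun r _ => hterm r, ← map_sum, ← ContinuousLinearMap.sum_apply,
    sum_tensR_conj]
  -- goal : prj H (m+k) (opT (prj H m) id z) = z
  have h1 : opT (prj H m) (ContinuousLinearMap.id ℂ (TP n k)) z = z := by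
    conv_lhs => rw [← hz]
    have h := DFunLike.congr_fun (absorbL H hsp m k) z
    simp only [ContinuousLinearMap.comp_apply] at h
    rw [h, hz]
  rw [h1, hz]

lemma opT_one_prj_fix (hsp : IsSubproduct H) {m k : ℕ} {z : TP n (m + k)}
    (hz : prj H (m + k) z = z) :
    opT (ContinuousLinearMap.id ℂ (TP n m)) (prj H k) z = z := by
  conv_lhs => rw [← hz]
  have h := DFunLike.congr_fun (absorbR H hsp m k) z
  simp only [ContinuousLinearMap.comp_apply] at h
  rw [h, hz]

lemma opT_ext_fix (hsp : IsSubproduct H) {m k : ℕ} (A : ↥(H m) →L[ℂ] ↥(H m))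
    {z : TP n (m + k)} (hz : prj H (m + k) z = z) :
    opT (extOp H A) (prj H k) z
      = opT (extOp H A) (ContinuousLinearMap.id ℂ (TP n k)) z := by
  have hsplit : opT (extOp H A) (ContinuousLinearMap.id ℂ (TP n k)) ∘L
      opT (ContinuousLinearMap.id ℂ (TP n m)) (prj H k) = opT (extOp H A) (prj H k) := by
    rw [opT_comp, ContinuousLinearMap.comp_id, ContinuousLinearMap.id_comp]
  rw [← hsplit]
  simp only [ContinuousLinearMap.comp_apply]
  rw [opT_one_prj_fix H hsp hz]

lemma mainV (hsp : IsSubproduct H) (hsa : IsSelfAdjoint Q)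
    (hq : ∀ j : Fin n, 0 < (ent Q (letter j) (letter j)).re ∧
      (ent Q (letter j) (letter j)).im = 0)
    (hdiag : ∀ i j : Fin n, i ≠ j → ent Q (letter i) (letter j) = 0)
    (hpres : ∀ a, prj H a ∘L tpow Q a ∘L prj H a = tpow Q a ∘L prj H a)
    (m k : ℕ) (A : ↥(H m) →L[ℂ] ↥(H m)) (hbot : H (m + k) ≠ ⊥)
    (hm : H m ≠ ⊥) (hk : H k ≠ ⊥) :
    cmpOp H (VmlStar H Q m k ∘L opT (extOp H A) (prj H k) ∘L Vml H Q m k)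
      = cmpOp H (opT (extOp H A) (ContinuousLinearMap.id ℂ (TP n k))) := by
  set B := extOp H A with hB
  have htrm : trQ H Q m ≠ 0 := trQ_ne_zero H Q hq hdiag hm
  have htrk : trQ H Q k ≠ 0 := trQ_ne_zero H Q hq hdiag hk
  have htrl : trQ H Q (m + k) ≠ 0 := trQ_ne_zero H Q hq hdiag hbot
  have hQc : IsUnit (cmpOp H (tpow Q (m + k))) :=
    cmp_tpow_isUnit H Q hq hdiag (m + k) (hpres (m + k))
  set G := Ring.inverse (cmpOp H (tpow Q (m + k))) with hGdef
  have hcm := prj_tpow_comm H Q hsa (hpres m)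
  have hck := prj_tpow_comm H Q hsa (hpres k)
  have hcl := prj_tpow_comm H Q hsa (hpres (m + k))
  have hlam2 : lamC H Q m k * lamC H Q m k
      = trQ H Q m * trQ H Q k / trQ H Q (m + k) := by
    have hb : trQ H Q m * trQ H Q k / trQ H Q (m + k) ≠ 0 :=
      div_ne_zero (mul_ne_zero htrm htrk) htrl
    have hl0 : lamC H Q m k
        = (trQ H Q m * trQ H Q k / trQ H Q (m + k)) ^ ((1 : ℂ) / 2) := rfl
    rw [hl0, ← Complex.cpow_add _ _ hb,
      show ((1 : ℂ) / 2 + (1 : ℂ) / 2) = 1 by norm_num, Complex.cpow_one]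
  refine ContinuousLinearMap.ext fun x => ?_
  set z := (H (m + k)).subtypeL x with hzdef
  have hz : prj H (m + k) z = z := prj_mem H (Submodule.coe_mem x)
  have hLHS : cmpOp H (VmlStar H Q m k ∘L opT B (prj H k) ∘L Vml H Q m k) x
      = (H (m + k)).orthogonalProjectionOnto
          (VmlStar H Q m k (opT B (prj H k) (Vml H Q m k z))) := rfl
  have hRHS : cmpOp H (opT B (ContinuousLinearMap.id ℂ (TP n k))) x
      = (H (m + k)).orthogonalProjectionOnto
          (opT B (ContinuousLinearMap.id ℂ (TP n k)) z) := rfl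
  rw [hLHS, hRHS]
  set u := opT B (ContinuousLinearMap.id ℂ (TP n k)) z with hu
  rw [Vml_fix H Q hsp hz, map_smul, opT_ext_fix H hsp A hz, ← hu, map_smul, map_smul]
  -- goal : lam • π (VmlStar u) = π u
  have c1 : opT (prj H m) (prj H k) u = u := by
    have hx1 : opT (prj H m) (prj H k) ∘L opT B (ContinuousLinearMap.id ℂ (TP n k))
        = opT B (prj H k) := by
      rw [opT_comp, prj_extOp, ContinuousLinearMap.comp_id]
    have h := DFunLike.congr_fun hx1 z
    simp only [ContinuousLinearMap.comp_apply] at h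
    rw [← hu] at h
    rw [h, opT_ext_fix H hsp A hz, ← hu]
  have c2 : opT (tpow Q m) (tpow Q k) u = tpow Q (m + k) u :=
    DFunLike.congr_fun (opT_tpow Q m k) u
  have c3 : opT (prj H m) (prj H k) (tpow Q (m + k) u) = tpow Q (m + k) u := by
    have hswap : opT (prj H m) (prj H k) ∘L opT (tpow Q m) (tpow Q k)
        = opT (tpow Q m) (tpow Q k) ∘L opT (prj H m) (prj H k) := by
      rw [opT_comp, opT_comp, hcm, hck]
    have h := DFunLike.congr_fun hswap u
    simp only [ContinuousLinearMap.comp_apply] at h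
    rw [c2, c1, c2] at h
    exact h
  have hVS : VmlStar H Q m k u
      = (lamC H Q m k * ((trQ H Q m)⁻¹ * (trQ H Q k)⁻¹) * trQ H Q (m + k)) •
          extOp H G (tpow Q (m + k) u) := by
    have h0 : VmlStar H Q m k = lamC H Q m k •
        (extOp H (trQ H Q (m + k) • G) ∘L opT (rhoExt H Q m) (rhoExt H Q k)) := rfl
    have hrm : rhoExt H Q m
        = (trQ H Q m)⁻¹ • (prj H m ∘L (tpow Q m ∘L prj H m)) := rfl
    have hrk : rhoExt H Q k
        = (trQ H Q k)⁻¹ • (prj H k ∘L (tpow Q k ∘L prj H k)) := rfl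
    have hrho : opT (rhoExt H Q m) (rhoExt H Q k) = ((trQ H Q m)⁻¹ * (trQ H Q k)⁻¹) •
        (opT (prj H m) (prj H k) ∘L
          (opT (tpow Q m) (tpow Q k) ∘L opT (prj H m) (prj H k))) := by
      rw [hrm, hrk, opT_smul_smul]
      congr 1
      rw [← opT_comp, ← opT_comp]
    rw [h0, ContinuousLinearMap.smul_apply, ContinuousLinearMap.comp_apply, hrho,
      ContinuousLinearMap.smul_apply]
    simp only [ContinuousLinearMap.comp_apply]
    rw [c1, c2, c3, map_smul, extOp_smul, ContinuousLinearMap.smul_apply,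
      smul_smul, smul_smul]
  rw [hVS, map_smul, pi_extOp]
  have s5 : (H (m + k)).orthogonalProjectionOnto (tpow Q (m + k) u)
      = cmpOp H (tpow Q (m + k)) ((H (m + k)).orthogonalProjectionOnto u) := by
    have h1 := DFunLike.congr_fun (orthProj_comp_prj H (m + k)) (tpow Q (m + k) u)
    simp only [ContinuousLinearMap.comp_apply] at h1
    have h2 := DFunLike.congr_fun hcl u
    simp only [ContinuousLinearMap.comp_apply] at h2
    have h3 : prj H (m + k) u
        = (H (m + k)).subtypeL ((H (m + k)).orthogonalProjectionOnto u) := rfl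
    have h4 : (H (m + k)).orthogonalProjectionOnto (tpow Q (m + k)
        ((H (m + k)).subtypeL ((H (m + k)).orthogonalProjectionOnto u)))
        = cmpOp H (tpow Q (m + k)) ((H (m + k)).orthogonalProjectionOnto u) := rfl
    rw [← h1, h2, h3, h4]
  rw [s5]
  have s6 : G (cmpOp H (tpow Q (m + k)) ((H (m + k)).orthogonalProjectionOnto u))
      = (H (m + k)).orthogonalProjectionOnto u := by
    have h := DFunLike.congr_fun (Ring.inverse_mul_cancel _ hQc)
      ((H (m + k)).orthogonalProjectionOnto u)
    rw [ContinuousLinearMap.mul_apply, ContinuousLinearMap.one_apply] at h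
    exact h
  rw [s6, smul_smul]
  have hone : lamC H Q m k *
      (lamC H Q m k * ((trQ H Q m)⁻¹ * (trQ H Q k)⁻¹) * trQ H Q (m + k)) = 1 := by
    have hr : lamC H Q m k *
        (lamC H Q m k * ((trQ H Q m)⁻¹ * (trQ H Q k)⁻¹) * trQ H Q (m + k))
        = (lamC H Q m k * lamC H Q m k) * ((trQ H Q m)⁻¹ * (trQ H Q k)⁻¹) *
          trQ H Q (m + k) := by ring
    rw [hr, hlam2]
    field_simp
  rw [hone, one_smul]

end
end Aux7
/-- **Statement 10.** `V_{m,l}^* (A ⊗ 1_{H_{l−m}}) V_{m,l} = Σ_{|r|=l−m} R_r A R_r^* |_{H_l}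
= ι_{m,l}(A)` (with `l = m + k`). -/
theorem stmt10 {n : ℕ} (H : ∀ m, Submodule ℂ (TP n m)) (hsp : IsSubproduct H)
    (Q : TP n 1 →L[ℂ] TP n 1) (hpos : Q.IsPositive) (hinv : IsUnit Q)
    (hdiag : ∀ i j : Fin n, i ≠ j → ent Q (letter i) (letter j) = 0)
    (hpres : ∀ m, prj H m ∘L tpow Q m ∘L prj H m = tpow Q m ∘L prj H m)
    (m k : ℕ) (A : ↥(H m) →L[ℂ] ↥(H m)) :
    cmpOp H (VmlStar H Q m k ∘L opT (extOp H A) (prj H k) ∘L Vml H Q m k) =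
      cmpOp H (∑ r : Wd n k,
        rshW H m k r ∘L extOp H A ∘L ContinuousLinearMap.adjoint (rshW H m k r)) ∧
    cmpOp H (∑ r : Wd n k,
        rshW H m k r ∘L extOp H A ∘L ContinuousLinearMap.adjoint (rshW H m k r)) =
      iota H (Nat.le_add_right m k) A := by
  have hq := q_pos Q hpos hinv hdiag
  constructor
  · rw [mainS H hsp m k A]
    by_cases hbot : H (m + k) = ⊥
    · have hss : Subsingleton ↥(H (m + k)) := by rw [hbot]; infer_instance
      exact ContinuousLinearMap.ext fun x => Subsingleton.elim _ _
    · exact mainV H Q hsp hpos.isSelfAdjoint hq hdiag hpres m k A hbot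
        (fun h => hbot (bot_prop H hsp (Or.inl h)))
        (fun h => hbot (bot_prop H hsp (Or.inr h)))
  · have hio : iota H (Nat.le_add_right m k) A
        = cmpOp H (opTG (Nat.le_add_right m k) (extOp H A)
            (ContinuousLinearMap.id ℂ (TP n (m + k - m)))) := rfl
    rw [hio, opTG_eq_opT]
    exact mainS H hsp m k A
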